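/- Let r be a real number with 0 < r < d. The following are equivalent: (1) A ∈ W_{(n−d+r)/(d−r)}(d, n−d); (2) there exist R > 0, a sequence t_i → ∞ and nonzero vectors v_i ∈ ℤ^n such that ‖b_{d·t_i} g_A v_i‖ ≤ R e^{−r t_i} for all i; (3) there exist C > 0, a sequence t_i → ∞ and nonzero vectors v_i ∈ ℤ^n such that sup_{ω∈Ω} ‖g_{t_i} ω g_A v_i‖ ≤ C e^{(d−r−1)t_i} for all i. -/

import Mathlib

open Matrix MeasureTheory Filter Topology

noncomputable section

abbrev SLn (n : ℕ) := Matrix.SpecialLinearGroup (Fin n) ℝ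

instance SLn.topologicalSpace (n : ℕ) : TopologicalSpace (SLn n) :=
  TopologicalSpace.induced (fun g => (g : Matrix (Fin n) (Fin n) ℝ)) inferInstance

/-- The diagonal flow `g_t = diag(e^{(n-1)t}, e^{-t}, …, e^{-t})`. -/
def gtFlow (n : ℕ) (hn : 0 < n) (t : ℝ) : SLn n :=
  ⟨Matrix.diagonal (fun i => if (i : ℕ) = 0 then Real.exp ((n - 1 : ℝ) * t) else Real.exp (-t)),
    by
      rcases Nat.exists_eq_succ_of_ne_zero hn.ne' with ⟨m, rfl⟩
      rw [Matrix.det_diagonal, Fin.prod_univ_succ]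
      have h1 : ∀ i : Fin m,
          (if ((i.succ : Fin (m+1)) : ℕ) = 0 then Real.exp (((m.succ : ℝ) - 1) * t)
            else Real.exp (-t)) = Real.exp (-t) := by
        intro i; simp [Fin.val_succ]
      rw [Finset.prod_congr rfl (fun i _ => h1 i)]
      simp only [Fin.val_zero, if_true, Finset.prod_const, Finset.card_univ,
        Fintype.card_fin, if_true]
      rw [← Real.exp_nat_mul, ← Real.exp_add]
      have h2 : ((m.succ : ℝ) - 1) * t + (m : ℝ) * -t = 0 := by push_cast; ring
      rw [h2, Real.exp_zero]⟩

/-- The unipotent element `u(v)` whose first row is `(1, v)`. -/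
def uv (n : ℕ) (v : Fin (n - 1) → ℝ) : SLn n :=
  ⟨Matrix.of fun i j =>
      if i = j then 1
      else if hij : (i : ℕ) = 0 ∧ (j : ℕ) ≠ 0 then v ⟨(j : ℕ) - 1, by have := j.isLt; omega⟩
      else 0,
    by
      have h := Matrix.det_of_upperTriangular (M := Matrix.of fun i j : Fin n =>
        if i = j then (1:ℝ)
        else if hij : (i : ℕ) = 0 ∧ (j : ℕ) ≠ 0 then v ⟨(j : ℕ) - 1, by have := j.isLt; omega⟩
        else 0) ?_
      · rw [h]; simp
      · intro i j hji
        have hij : ¬ i = j := by exact fun h => absurd h (by exact Fin.ne_of_gt hji)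
        have : ¬ ((i : ℕ) = 0 ∧ (j : ℕ) ≠ 0) := by
          rintro ⟨hi, -⟩
          have : (j : ℕ) < (i : ℕ) := hji
          omega
        simp [hij, this]⟩

/-- The block matrix `(I_d  A ; 0  I_{n-d})` as an element of `SL_n(ℝ)`. -/
def gA (n d : ℕ) (A : Matrix (Fin d) (Fin (n - d)) ℝ) : SLn n :=
  ⟨Matrix.of fun i j =>
      if i = j then 1
      else if hij : (i : ℕ) < d ∧ d ≤ (j : ℕ) then
        A ⟨i, hij.1⟩ ⟨(j : ℕ) - d, by have := j.isLt; omega⟩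
      else 0,
    by
      have h := Matrix.det_of_upperTriangular (M := Matrix.of fun i j : Fin n =>
        if i = j then (1:ℝ)
        else if hij : (i : ℕ) < d ∧ d ≤ (j : ℕ) then
          A ⟨i, hij.1⟩ ⟨(j : ℕ) - d, by have := j.isLt; omega⟩
        else 0) ?_
      · rw [h]; simp
      · intro i j hji
        have hij : ¬ i = j := Fin.ne_of_gt hji
        have hlt : (j : ℕ) < (i : ℕ) := hji
        have : ¬ ((i : ℕ) < d ∧ d ≤ (j : ℕ)) := by omega
        simp [hij, this]⟩

/-- The flow `b_t = diag(e^{((n-d)/d)t} I_d, e^{-t} I_{n-d})`. -/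
def btFlow (n d : ℕ) (hd : 0 < d) (hdn : d ≤ n) (t : ℝ) : SLn n :=
  ⟨Matrix.diagonal (fun i =>
      if (i : ℕ) < d then Real.exp (((n : ℝ) - d) / d * t) else Real.exp (-t)),
    by
      rw [Matrix.det_diagonal]
      have key : ∀ i : Fin n,
          (if (i : ℕ) < d then Real.exp (((n : ℝ) - d) / d * t) else Real.exp (-t))
            = Real.exp (if (i : ℕ) < d then ((n : ℝ) - d) / d * t else -t) := by
        intro i; split <;> rfl
      rw [Finset.prod_congr rfl (fun i _ => key i), ← Real.exp_sum]
      have hsum : (∑ i : Fin n, if (i : ℕ) < d then ((n : ℝ) - d) / d * t else -t) = 0 := by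
        rw [Fin.sum_univ_eq_sum_range (fun i => if i < d then ((n : ℝ) - d) / d * t else -t) n]
        rw [Finset.range_eq_Ico, ← Finset.sum_Ico_consecutive _ (Nat.zero_le d) hdn]
        rw [Finset.sum_congr rfl (fun i hi => if_pos (Finset.mem_Ico.mp hi).2),
          Finset.sum_congr rfl (g := fun _ => -t)
            (fun i hi => if_neg (by have := (Finset.mem_Ico.mp hi).1; omega))]
        simp only [Finset.sum_const, Nat.card_Ico, nsmul_eq_mul, Nat.sub_zero]
        have hd' : (d : ℝ) ≠ 0 := Nat.cast_ne_zero.mpr hd.ne'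
        have hnd : ((n - d : ℕ) : ℝ) = (n : ℝ) - d := by
          push_cast [Nat.cast_sub hdn]; ring
        rw [hnd]
        field_simp
        ring
      rw [hsum, Real.exp_zero]⟩

/-- The vector `(1, x) ∈ ℝ^d` obtained by prepending `1` to `x ∈ ℝ^{d-1}`. -/
def tildeVec (d : ℕ) (x : Fin (d - 1) → ℝ) : Fin d → ℝ :=
  fun i => if h : (i : ℕ) = 0 then 1 else x ⟨(i : ℕ) - 1, by have := i.isLt; omega⟩

/-- The affine subspace `L_A = {(x, (1,x)A) : x ∈ ℝ^{d-1}}` of `ℝ^{n-1}`. -/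
def LAset (n d : ℕ) (hd : 2 ≤ d) (hdn : d ≤ n - 1) (A : Matrix (Fin d) (Fin (n - d)) ℝ) :
    Set (Fin (n - 1) → ℝ) :=
  {y | ∃ x : Fin (d - 1) → ℝ, y = fun j : Fin (n - 1) =>
    if h : (j : ℕ) < d - 1 then x ⟨(j : ℕ), h⟩
    else ∑ i : Fin d, tildeVec d x i * A i ⟨(j : ℕ) - (d - 1), by have := j.isLt; omega⟩}

/-- `A ∈ W_r(ι, κ)`: there is `C > 0` such that `‖Aq + p‖ ≤ C‖q‖^{-r}` has
infinitely many integer solutions. -/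
def MemW (r : ℝ) {ι κ : Type*} [Fintype ι] [Fintype κ] (A : Matrix ι κ ℝ) : Prop :=
  ∃ C : ℝ, 0 < C ∧ {pq : (ι → ℤ) × (κ → ℤ) |
    ‖A.mulVec (fun j => ((pq.2 j : ℝ))) + (fun i => ((pq.1 i : ℝ)))‖
      ≤ C * ‖(fun j => ((pq.2 j : ℝ)) : κ → ℝ)‖ ^ (-r)}.Infinite

/-- `A ∈ W'_r(ι, κ)`: for every `C > 0` the inequality `‖Aq + p‖ ≤ C‖q‖^{-r}` has
a nonzero integer solution. -/
def MemW' (r : ℝ) {ι κ : Type*} [Fintype ι] [Fintype κ] (A : Matrix ι κ ℝ) : Prop :=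
  ∀ C : ℝ, 0 < C → ∃ pq : (ι → ℤ) × (κ → ℤ), pq ≠ 0 ∧
    ‖A.mulVec (fun j => ((pq.2 j : ℝ))) + (fun i => ((pq.1 i : ℝ)))‖
      ≤ C * ‖(fun j => ((pq.2 j : ℝ)) : κ → ℝ)‖ ^ (-r)

/-- `Γ = SL_n(ℤ)` as a subgroup of `SL_n(ℝ)`. -/
def Gamma (n : ℕ) : Subgroup (SLn n) :=
  (Matrix.SpecialLinearGroup.map (n := Fin n) (Int.castRingHom ℝ)).range

/-- The homogeneous space `X = SL_n(ℝ)/SL_n(ℤ)`. -/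
abbrev XSpace (n : ℕ) := SLn n ⧸ Gamma n

instance (n : ℕ) : MeasurableSpace (XSpace n) := borel _

/-- The column indices `1 ≤ i < j ≤ n-2` of the matrix `A^ext`. -/
abbrev PairIdx (n : ℕ) := {p : Fin (n - 2) × Fin (n - 2) // p.1 < p.2}

/-- The matrix `A^ext` associated to a `2 × (n-2)` matrix `A`. -/
def Aext (n : ℕ) (A : Matrix (Fin 2) (Fin (n - 2)) ℝ) :
    Matrix (Fin (n - 2) ⊕ (Fin (n - 2) ⊕ Unit)) (PairIdx n) ℝ :=
  Matrix.of fun row col =>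
    match row with
    | Sum.inl k =>
        if k = col.1.1 then -(A 0 col.1.2) else if k = col.1.2 then A 0 col.1.1 else 0
    | Sum.inr (Sum.inl k) =>
        if k = col.1.1 then -(A 1 col.1.2) else if k = col.1.2 then A 1 col.1.1 else 0
    | Sum.inr (Sum.inr _) => A 0 col.1.2 * A 1 col.1.1 - A 0 col.1.1 * A 1 col.1.2

/-- Inclusion of `SL_n(ℤ)` into `SL_n(ℝ)`. -/
def SLmapZ (n : ℕ) : Matrix.SpecialLinearGroup (Fin n) ℤ →* SLn n :=
  Matrix.SpecialLinearGroup.map (Int.castRingHom ℝ)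

/-- Index of the standard basis of `⋀^k ℝ^N`: subsets of `Fin N` of cardinality `k`. -/
abbrev WIdx (N k : ℕ) := {s : Finset (Fin N) // s.card = k}

/-- Identification of `ι → ℝ` with the Euclidean space indexed by `ι`. -/
def toEuc {ι : Type*} [Fintype ι] (f : ι → ℝ) : EuclideanSpace ℝ ι :=
  (WithLp.equiv 2 (ι → ℝ)).symm f

/-- The Plücker coordinates of the wedge `w₁ ∧ ⋯ ∧ w_k` of vectors in `ℝ^N`. -/
def wedgeCoords (N k : ℕ) (w : Fin k → (Fin N → ℝ)) : WIdx N k → ℝ :=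
  fun S => (Matrix.of fun a b : Fin k => w a ((S.1.orderIsoOfFin S.2 b : Fin N))).det

/-- The wedge `w₁ ∧ ⋯ ∧ w_k` as an element of the Euclidean space `⋀^k ℝ^N`. -/
def wedgeE (N k : ℕ) (w : Fin k → (Fin N → ℝ)) : EuclideanSpace ℝ (WIdx N k) :=
  toEuc (wedgeCoords N k w)

/-- The `k`-th compound matrix, giving the action of a matrix on `⋀^k ℝ^N`
in Plücker coordinates. -/
def compound (N k : ℕ) (M : Matrix (Fin N) (Fin N) ℝ) : Matrix (WIdx N k) (WIdx N k) ℝ :=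
  Matrix.of fun S T =>
    (Matrix.of fun a b : Fin k =>
      M ((S.1.orderIsoOfFin S.2 a : Fin N)) ((T.1.orderIsoOfFin T.2 b : Fin N))).det

/-- Action of `g ∈ SL_n(ℝ)` on `⋀^k ℝ^N` in Plücker coordinates. -/
def wedgeAction (N k : ℕ) (M : Matrix (Fin N) (Fin N) ℝ) (w : EuclideanSpace ℝ (WIdx N k)) :
    EuclideanSpace ℝ (WIdx N k) :=
  toEuc ((compound N k M).mulVec (WithLp.equiv 2 _ w))

/-- The parabolic subgroup `P_j ⊆ SL_n(ℝ)` (block lower triangular with an upper-left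
`j × j` block), as a set. -/
def Pblock (n j : ℕ) : Set (SLn n) :=
  {g | ∀ s t : Fin n, (s : ℕ) < j → j ≤ (t : ℕ) → (g : Matrix (Fin n) (Fin n) ℝ) s t = 0}

/-- A vector `y ∈ ℝ^{n-1}` is Dirichlet-improvable. -/
def DirichletImprovable (n : ℕ) (y : Fin (n - 1) → ℝ) : Prop :=
  ∃ δ : ℝ, 0 < δ ∧ δ < 1 ∧ ∃ T₀ : ℝ, ∀ T : ℝ, T₀ ≤ T →
    ∃ (p : Fin (n - 1) → ℤ) (q : ℤ), q ≠ 0 ∧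
      ‖(fun i => (q : ℝ) * y i + (p i : ℝ) : Fin (n - 1) → ℝ)‖ ≤ δ / T ∧
      |(q : ℝ)| ≤ T ^ (n - 1)

/-- Flattening of an `n × n` matrix into a vector in `ℝ^{n·n}`. -/
def flatten (n : ℕ) (M : Matrix (Fin n) (Fin n) ℝ) : Fin (n * n) → ℝ :=
  fun idx => M (finProdFinEquiv.symm idx).1 (finProdFinEquiv.symm idx).2

/-- The adjoint action `Ad(g) : x ↦ g x g⁻¹` of `g ∈ SL_n(ℝ)` written as an
`(n·n) × (n·n)` matrix in the flattened coordinates. -/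
def AdMatrix (n : ℕ) (g : SLn n) : Matrix (Fin (n * n)) (Fin (n * n)) ℝ :=
  Matrix.of fun r c =>
    (g : Matrix (Fin n) (Fin n) ℝ) (finProdFinEquiv.symm r).1 (finProdFinEquiv.symm c).1 *
    ((g⁻¹ : SLn n) : Matrix (Fin n) (Fin n) ℝ) (finProdFinEquiv.symm c).2 (finProdFinEquiv.symm r).2

namespace Interp

/-- first-block coordinates of an integer vector, as reals -/
def vp (n d : ℕ) (hdn : d ≤ n) (v : Fin n → ℤ) : Fin d → ℝ :=
  fun i => (v ⟨i, by have := i.isLt; omega⟩ : ℝ)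

/-- last-block coordinates of an integer vector, as reals -/
def vq (n d : ℕ) (v : Fin n → ℤ) : Fin (n - d) → ℝ :=
  fun j => (v ⟨d + j, by have := j.isLt; omega⟩ : ℝ)

/-- the error vector `A q + p` -/
def errV (n d : ℕ) (hdn : d ≤ n) (A : Matrix (Fin d) (Fin (n - d)) ℝ) (v : Fin n → ℤ) :
    Fin d → ℝ :=
  A.mulVec (vq n d v) + vp n d hdn v

lemma gA_mulVec (n d : ℕ) (hdn : d ≤ n) (A : Matrix (Fin d) (Fin (n - d)) ℝ) (x : Fin n → ℝ) (i : Fin n) :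
    ((gA n d A : SLn n) : Matrix (Fin n) (Fin n) ℝ).mulVec x i =
      if h : (i : ℕ) < d then
        x i + ∑ j : Fin (n - d), A ⟨i, h⟩ j * x ⟨d + j, by have := j.isLt; omega⟩
      else x i := by
  have hnd : d + (n - d) = n := by omega
  set e : (Fin d ⊕ Fin (n - d)) ≃ Fin n := finSumFinEquiv.trans (finCongr hnd) with he
  have he1 : ∀ j : Fin d, ((e (Sum.inl j) : Fin n) : ℕ) = (j : ℕ) := by
    intro j; simp [he]
  have he2 : ∀ j : Fin (n - d), ((e (Sum.inr j) : Fin n) : ℕ) = d + (j : ℕ) := by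
    intro j; simp [he]
  have key : ((gA n d A : SLn n) : Matrix (Fin n) (Fin n) ℝ).mulVec x i
      = ∑ j : Fin n, ((gA n d A : SLn n) : Matrix (Fin n) (Fin n) ℝ) i j * x j := rfl
  rw [key, ← Equiv.sum_comp e (fun j => ((gA n d A : SLn n) : Matrix (Fin n) (Fin n) ℝ) i j * x j),
    Fintype.sum_sum_type]
  by_cases h : (i : ℕ) < d
  · rw [dif_pos h]
    have h1 : ∀ j : Fin d,
        ((gA n d A : SLn n) : Matrix (Fin n) (Fin n) ℝ) i (e (Sum.inl j)) * x (e (Sum.inl j))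
          = if (⟨i, h⟩ : Fin d) = j then x (e (Sum.inl j)) else 0 := by
      intro j
      have hval := he1 j
      by_cases hij : i = e (Sum.inl j)
      · have : (⟨i, h⟩ : Fin d) = j := by
          apply Fin.ext; simp [← hval, ← hij]
        simp only [gA, Matrix.of_apply, if_pos hij, this, if_pos rfl, one_mul, if_true]
      · have hne : ¬(⟨i, h⟩ : Fin d) = j := by
          intro hc
          apply hij
          apply Fin.ext
          have : (i : ℕ) = (j : ℕ) := congrArg Fin.val hc
          omega
        have hcond : ¬((i : ℕ) < d ∧ d ≤ ((e (Sum.inl j) : Fin n) : ℕ)) := by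
          rw [hval]; omega
        simp only [gA, Matrix.of_apply, if_neg hij, dif_neg hcond, zero_mul, if_neg hne]
    rw [Finset.sum_congr rfl (fun j _ => h1 j), Finset.sum_ite_eq Finset.univ (⟨i, h⟩ : Fin d)]
    simp only [Finset.mem_univ, if_pos]
    have h2 : ∀ j : Fin (n - d),
        ((gA n d A : SLn n) : Matrix (Fin n) (Fin n) ℝ) i (e (Sum.inr j)) * x (e (Sum.inr j))
          = A ⟨i, h⟩ j * x ⟨d + (j : ℕ), by have := j.isLt; omega⟩ := by
      intro j
      have hval := he2 j
      have hij : ¬ i = e (Sum.inr j) := by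
        intro hc; rw [hc] at h; omega
      have hcond : (i : ℕ) < d ∧ d ≤ ((e (Sum.inr j) : Fin n) : ℕ) := by
        rw [hval]; omega
      have hx : x (e (Sum.inr j)) = x ⟨d + (j : ℕ), by have := j.isLt; omega⟩ := rfl
      simp only [gA, Matrix.of_apply, if_neg hij, dif_pos hcond, hx]
      congr 2
      · exact Fin.ext (by simp [hval])
    rw [Finset.sum_congr rfl (fun j _ => h2 j)]
    have hxi : x (e (Sum.inl (⟨(i : ℕ), h⟩ : Fin d))) = x i := rfl
    rw [hxi]
  · rw [dif_neg h]
    have h1 : ∀ j : Fin d,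
        ((gA n d A : SLn n) : Matrix (Fin n) (Fin n) ℝ) i (e (Sum.inl j)) * x (e (Sum.inl j))
          = 0 := by
      intro j
      have hval := he1 j
      have hij : ¬ i = e (Sum.inl j) := by
        intro hc; rw [hc, hval] at h; have := j.isLt; omega
      have hcond : ¬((i : ℕ) < d ∧ d ≤ ((e (Sum.inl j) : Fin n) : ℕ)) := by omega
      simp only [gA, Matrix.of_apply, if_neg hij, dif_neg hcond, zero_mul]
    rw [Finset.sum_congr rfl (fun j _ => h1 j), Finset.sum_const_zero, zero_add]
    have hi' : (i : ℕ) - d < n - d := by have := i.isLt; omega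
    have h2 : ∀ j : Fin (n - d),
        ((gA n d A : SLn n) : Matrix (Fin n) (Fin n) ℝ) i (e (Sum.inr j)) * x (e (Sum.inr j))
          = if (⟨(i : ℕ) - d, hi'⟩ : Fin (n - d)) = j then x (e (Sum.inr j)) else 0 := by
      intro j
      have hval := he2 j
      by_cases hij : i = e (Sum.inr j)
      · have : (⟨(i : ℕ) - d, hi'⟩ : Fin (n - d)) = j := by
          apply Fin.ext
          have : (i : ℕ) = d + (j : ℕ) := by rw [hij, hval]
          simp [this]
        simp only [gA, Matrix.of_apply, if_pos hij, this, if_pos rfl, one_mul, if_true]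
      · have hne : ¬(⟨(i : ℕ) - d, hi'⟩ : Fin (n - d)) = j := by
          intro hc
          apply hij
          apply Fin.ext
          have : (i : ℕ) - d = (j : ℕ) := congrArg Fin.val hc
          omega
        have hcond : ¬((i : ℕ) < d ∧ d ≤ ((e (Sum.inr j) : Fin n) : ℕ)) := by omega
        simp only [gA, Matrix.of_apply, if_neg hij, dif_neg hcond, zero_mul, if_neg hne]
    rw [Finset.sum_congr rfl (fun j _ => h2 j), Finset.sum_ite_eq Finset.univ]
    simp only [Finset.mem_univ, if_pos]
    congr 1
    exact Fin.ext (by simp [he2]; omega)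


lemma errV_apply (n d : ℕ) (hdn : d ≤ n) (A : Matrix (Fin d) (Fin (n - d)) ℝ)
    (v : Fin n → ℤ) (i : Fin d) :
    errV n d hdn A v i = (v ⟨(i : ℕ), by have := i.isLt; omega⟩ : ℝ)
      + ∑ j : Fin (n - d), A i j * (v ⟨d + (j : ℕ), by have := j.isLt; omega⟩ : ℝ) := by
  simp only [errV, vp, vq, Pi.add_apply, Matrix.mulVec, dotProduct]
  ring

lemma bt_gA_mulVec (n d : ℕ) (hd0 : 0 < d) (hdn : d ≤ n)
    (A : Matrix (Fin d) (Fin (n - d)) ℝ) (t : ℝ) (v : Fin n → ℤ) (i : Fin n) :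
    ((btFlow n d hd0 hdn (d * t) * gA n d A : SLn n) :
        Matrix (Fin n) (Fin n) ℝ).mulVec (fun j => ((v j : ℝ))) i =
      if h : (i : ℕ) < d then
        Real.exp (((n : ℝ) - d) * t) * errV n d hdn A v ⟨(i : ℕ), h⟩
      else Real.exp (-(d * t)) * vq n d v ⟨(i : ℕ) - d, by have := i.isLt; omega⟩ := by
  rw [Matrix.SpecialLinearGroup.coe_mul, ← Matrix.mulVec_mulVec]
  have hcoe : ((btFlow n d hd0 hdn (d * t) : SLn n) : Matrix (Fin n) (Fin n) ℝ)
      = Matrix.diagonal (fun i : Fin n =>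
          if (i : ℕ) < d then Real.exp (((n : ℝ) - d) / d * (d * t)) else Real.exp (-(d * t))) :=
    rfl
  rw [hcoe, Matrix.mulVec_diagonal, gA_mulVec n d hdn A _ i]
  have hexp : ((n : ℝ) - d) / d * (d * t) = ((n : ℝ) - d) * t := by
    have : (d : ℝ) ≠ 0 := Nat.cast_ne_zero.mpr hd0.ne'
    field_simp
  by_cases h : (i : ℕ) < d
  · rw [if_pos h, dif_pos h, dif_pos h, hexp, errV_apply n d hdn A v ⟨(i : ℕ), h⟩]
  · rw [if_neg h, dif_neg h, dif_neg h]
    congr 1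
    show ((v i : ℝ)) = ((v ⟨d + ((i : ℕ) - d), by have := i.isLt; omega⟩ : ℤ) : ℝ)
    congr 1
    · exact congrArg v (Fin.ext (by simp; omega))

lemma norm_bt_le (n d : ℕ) (hd0 : 0 < d) (hdn : d ≤ n)
    (A : Matrix (Fin d) (Fin (n - d)) ℝ) (t : ℝ) (v : Fin n → ℤ) (E Q : ℝ)
    (hE : ‖errV n d hdn A v‖ ≤ E) (hQ : ‖vq n d v‖ ≤ Q) :
    ‖((btFlow n d hd0 hdn (d * t) * gA n d A : SLn n) :
        Matrix (Fin n) (Fin n) ℝ).mulVec (fun j => ((v j : ℝ)))‖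
      ≤ max (Real.exp (((n : ℝ) - d) * t) * E) (Real.exp (-(d * t)) * Q) := by
  have hE0 : 0 ≤ E := le_trans (norm_nonneg _) hE
  have hQ0 : 0 ≤ Q := le_trans (norm_nonneg _) hQ
  rw [pi_norm_le_iff_of_nonneg (le_max_iff.mpr (Or.inl (by positivity)))]
  intro i
  rw [bt_gA_mulVec n d hd0 hdn A t v i]
  by_cases h : (i : ℕ) < d
  · rw [dif_pos h]
    refine le_max_of_le_left ?_
    rw [Real.norm_eq_abs, abs_mul, abs_of_pos (Real.exp_pos _)]
    exact mul_le_mul_of_nonneg_left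
      (le_trans (norm_le_pi_norm (errV n d hdn A v) _) hE) (Real.exp_pos _).le
  · rw [dif_neg h]
    refine le_max_of_le_right ?_
    rw [Real.norm_eq_abs, abs_mul, abs_of_pos (Real.exp_pos _)]
    exact mul_le_mul_of_nonneg_left
      (le_trans (norm_le_pi_norm (vq n d v) _) hQ) (Real.exp_pos _).le

lemma components_of_norm_bt (n d : ℕ) (hd0 : 0 < d) (hdn : d ≤ n)
    (A : Matrix (Fin d) (Fin (n - d)) ℝ) (t : ℝ) (v : Fin n → ℤ) (M : ℝ)
    (h : ‖((btFlow n d hd0 hdn (d * t) * gA n d A : SLn n) :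
        Matrix (Fin n) (Fin n) ℝ).mulVec (fun j => ((v j : ℝ)))‖ ≤ M) :
    ‖errV n d hdn A v‖ ≤ Real.exp (-(((n : ℝ) - d) * t)) * M ∧
      ‖vq n d v‖ ≤ Real.exp (d * t) * M := by
  have hM0 : 0 ≤ M := le_trans (norm_nonneg _) h
  set F := ((btFlow n d hd0 hdn (d * t) * gA n d A : SLn n) :
      Matrix (Fin n) (Fin n) ℝ).mulVec (fun j => ((v j : ℝ))) with hF
  constructor
  · rw [pi_norm_le_iff_of_nonneg (by positivity)]
    intro i
    have hidx : ((⟨(i : ℕ), by have := i.isLt; omega⟩ : Fin n) : ℕ) < d := i.isLt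
    have h1 : F ⟨(i : ℕ), by have := i.isLt; omega⟩
        = Real.exp (((n : ℝ) - d) * t) * errV n d hdn A v i := by
      rw [hF, bt_gA_mulVec n d hd0 hdn A t v _, dif_pos hidx]
    have h2 : ‖F ⟨(i : ℕ), by have := i.isLt; omega⟩‖ ≤ M :=
      le_trans (norm_le_pi_norm F _) h
    rw [h1, Real.norm_eq_abs, abs_mul, abs_of_pos (Real.exp_pos _)] at h2
    rw [Real.norm_eq_abs]
    calc |errV n d hdn A v i|
        = Real.exp (-(((n : ℝ) - d) * t)) * (Real.exp (((n : ℝ) - d) * t) * |errV n d hdn A v i|) := by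
          rw [← mul_assoc, ← Real.exp_add]; simp
      _ ≤ Real.exp (-(((n : ℝ) - d) * t)) * M :=
          mul_le_mul_of_nonneg_left h2 (Real.exp_pos _).le
  · rw [pi_norm_le_iff_of_nonneg (by positivity)]
    intro j
    have hjlt : d + (j : ℕ) < n := by have := j.isLt; omega
    have hidx : ¬ ((⟨d + (j : ℕ), hjlt⟩ : Fin n) : ℕ) < d := by simp
    have h1 : F ⟨d + (j : ℕ), hjlt⟩ = Real.exp (-(d * t)) * vq n d v j := by
      rw [hF, bt_gA_mulVec n d hd0 hdn A t v _, dif_neg hidx]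
      congr 1
      exact congrArg (vq n d v) (Fin.ext (by simp))
    have h2 : ‖F ⟨d + (j : ℕ), hjlt⟩‖ ≤ M := le_trans (norm_le_pi_norm F _) h
    rw [h1, Real.norm_eq_abs, abs_mul, abs_of_pos (Real.exp_pos _)] at h2
    rw [Real.norm_eq_abs]
    calc |vq n d v j|
        = Real.exp (d * t) * (Real.exp (-(d * t)) * |vq n d v j|) := by
          rw [← mul_assoc, ← Real.exp_add]; simp
      _ ≤ Real.exp (d * t) * M := mul_le_mul_of_nonneg_left h2 (Real.exp_pos _).le


lemma int_one_le_norm {ι : Type*} [Fintype ι] (q : ι → ℤ) (hq : q ≠ 0) :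
    1 ≤ ‖(fun j => ((q j : ℝ)) : ι → ℝ)‖ := by
  obtain ⟨j, hj⟩ : ∃ j, q j ≠ 0 := by
    by_contra hc; push_neg at hc; exact hq (funext hc)
  calc (1:ℝ) ≤ |((q j : ℝ))| := by
        rw [← Int.cast_abs]
        exact_mod_cast Int.one_le_abs hj
    _ ≤ _ := by
        rw [← Real.norm_eq_abs]
        exact norm_le_pi_norm (fun j => ((q j : ℝ))) j

lemma finite_int_bdd {ι : Type*} [Fintype ι] [DecidableEq ι] (M : ℝ) :
    {f : ι → ℤ | ∀ i, |((f i : ℝ))| ≤ M}.Finite := by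
  apply Set.Finite.subset (Set.finite_Icc (fun _ : ι => (-⌈M⌉ : ℤ)) (fun _ => ⌈M⌉))
  intro f hf
  rw [Set.mem_Icc]
  constructor <;> rw [Pi.le_def] <;> intro i
  · have h1 : -M ≤ ((f i : ℝ)) := (abs_le.mp (hf i)).1
    have h2 : -((⌈M⌉ : ℝ)) ≤ ((f i : ℝ)) := le_trans (neg_le_neg (Int.le_ceil M)) h1
    exact_mod_cast h2
  · have h1 : ((f i : ℝ)) ≤ ((⌈M⌉ : ℝ)) := le_trans (abs_le.mp (hf i)).2 (Int.le_ceil M)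
    exact_mod_cast h1

lemma pigeonhole_fiber {α β : Type*} {s : Set α} (f : α → β) (hs : s.Infinite)
    (hf : (f '' s).Finite) : ∃ y, (s ∩ f ⁻¹' {y}).Infinite := by
  by_contra hc
  push_neg at hc
  have hsub : s ⊆ ⋃ y ∈ f '' s, (s ∩ f ⁻¹' {y}) := by
    intro a ha
    exact Set.mem_biUnion (Set.mem_image_of_mem f ha) ⟨ha, rfl⟩
  exact hs (Set.Finite.subset (Set.Finite.biUnion hf (fun y _ => hc y)) hsub)

lemma mulVec_norm_le {ι κ : Type*} [Fintype ι] [Fintype κ] (A : Matrix ι κ ℝ) (x : κ → ℝ) :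
    ‖A.mulVec x‖ ≤ (∑ i, ∑ j, |A i j|) * ‖x‖ := by
  rw [pi_norm_le_iff_of_nonneg (by positivity)]
  intro i
  rw [Real.norm_eq_abs]
  calc |A.mulVec x i| = |∑ j, A i j * x j| := rfl
    _ ≤ ∑ j, |A i j * x j| := Finset.abs_sum_le_sum_abs _ _
    _ ≤ ∑ j, |A i j| * ‖x‖ := by
        apply Finset.sum_le_sum; intro j _
        rw [abs_mul]
        exact mul_le_mul_of_nonneg_left
          (by rw [← Real.norm_eq_abs]; exact norm_le_pi_norm x j) (abs_nonneg _)
    _ = (∑ j, |A i j|) * ‖x‖ := by rw [Finset.sum_mul]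
    _ ≤ (∑ i, ∑ j, |A i j|) * ‖x‖ := by
        apply mul_le_mul_of_nonneg_right _ (norm_nonneg _)
        exact Finset.single_le_sum (f := fun i => ∑ j, |A i j|)
          (fun i _ => by positivity) (Finset.mem_univ i)

lemma exp_rpow' (x y : ℝ) : (Real.exp x) ^ y = Real.exp (x * y) := by
  rw [Real.rpow_def_of_pos (Real.exp_pos x), Real.log_exp]


def Prop2 (n d : ℕ) (hd0 : 0 < d) (hdn : d ≤ n) (r : ℝ)
    (A : Matrix (Fin d) (Fin (n - d)) ℝ) : Prop :=
  ∃ R : ℝ, 0 < R ∧ ∃ t : ℕ → ℝ, Tendsto t atTop atTop ∧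
    ∃ v : ℕ → (Fin n → ℤ), (∀ i, v i ≠ 0) ∧ ∀ i,
      ‖((btFlow n d hd0 hdn (d * t i) * gA n d A : SLn n) :
          Matrix (Fin n) (Fin n) ℝ).mulVec (fun j => ((v i j : ℝ)))‖
        ≤ R * Real.exp (-(r * t i))

lemma two_to_one (n d : ℕ) (hn : 3 ≤ n) (hd : 2 ≤ d) (hdn : d ≤ n - 1)
    (r : ℝ) (hr0 : 0 < r) (hrd : r < d) (A : Matrix (Fin d) (Fin (n - d)) ℝ)
    (h : Prop2 n d (lt_of_lt_of_le two_pos hd) (le_trans hdn (Nat.sub_le n 1)) r A) :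
    MemW (((n : ℝ) - d + r) / (d - r)) A := by
  have hdn' : d ≤ n := by omega
  have hd0 : 0 < d := by omega
  obtain ⟨R, hR, t, ht, v, hv, hbound⟩ := h
  have hdr : 0 < (d : ℝ) - r := by linarith
  have hd1n : (d : ℝ) + 1 ≤ n := by exact_mod_cast (by omega : d + 1 ≤ n)
  have hnd : 0 < (n : ℝ) - d + r := by linarith
  set Rr : ℝ := ((n : ℝ) - d + r) / ((d : ℝ) - r) with hRrdef
  have hRr : 0 < Rr := div_pos hnd hdr
  have hprod : ((d : ℝ) - r) * Rr = (n : ℝ) - d + r := by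
    rw [hRrdef]; field_simp
  -- component bounds
  have hE : ∀ i, ‖errV n d hdn' A (v i)‖ ≤ R * Real.exp (-(((n : ℝ) - d + r) * t i)) := by
    intro i
    have hcomp := (components_of_norm_bt n d hd0 hdn' A (t i) (v i) _ (hbound i)).1
    calc ‖errV n d hdn' A (v i)‖
        ≤ Real.exp (-(((n : ℝ) - d) * t i)) * (R * Real.exp (-(r * t i))) := hcomp
      _ = R * (Real.exp (-(((n : ℝ) - d) * t i)) * Real.exp (-(r * t i))) := by ring
      _ = R * Real.exp (-(((n : ℝ) - d + r) * t i)) := by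
          rw [← Real.exp_add]; congr 1; ring
  have hQ : ∀ i, ‖vq n d (v i)‖ ≤ R * Real.exp (((d : ℝ) - r) * t i) := by
    intro i
    have hcomp := (components_of_norm_bt n d hd0 hdn' A (t i) (v i) _ (hbound i)).2
    calc ‖vq n d (v i)‖
        ≤ Real.exp ((d : ℝ) * t i) * (R * Real.exp (-(r * t i))) := hcomp
      _ = R * (Real.exp ((d : ℝ) * t i) * Real.exp (-(r * t i))) := by ring
      _ = R * Real.exp (((d : ℝ) - r) * t i) := by rw [← Real.exp_add]; congr 1; ring
  -- uniform smallness
  have hsmall : ∀ ε : ℝ, 0 < ε → ∃ M : ℕ, ∀ i, M ≤ i →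
      R * Real.exp (-(((n : ℝ) - d + r) * t i)) < ε := by
    intro ε hε
    have hc : Tendsto (fun i => ((n : ℝ) - d + r) * t i) atTop atTop :=
      ht.const_mul_atTop hnd
    have hev := hc.eventually_gt_atTop (Real.log (R / ε))
    rw [eventually_atTop] at hev
    obtain ⟨M, hM⟩ := hev
    refine ⟨M, fun i hi => ?_⟩
    have h1 : Real.log (R / ε) < ((n : ℝ) - d + r) * t i := hM i hi
    have h2 : R / ε < Real.exp (((n : ℝ) - d + r) * t i) := by
      have h2' := Real.exp_lt_exp.mpr h1
      rwa [Real.exp_log (by positivity)] at h2'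
    have h3 : R < ε * Real.exp (((n : ℝ) - d + r) * t i) := by
      rw [div_lt_iff₀ hε] at h2; linarith [h2]
    calc R * Real.exp (-(((n : ℝ) - d + r) * t i))
        < (ε * Real.exp (((n : ℝ) - d + r) * t i)) * Real.exp (-(((n : ℝ) - d + r) * t i)) :=
          mul_lt_mul_of_pos_right h3 (Real.exp_pos _)
      _ = ε := by rw [mul_assoc, ← Real.exp_add]; simp
  obtain ⟨N, hN⟩ := hsmall 1 one_pos
  -- the integer pairs
  set Pp : ℕ → (Fin d → ℤ) := fun i => fun k : Fin d => v i ⟨(k : ℕ), by have := k.isLt; omega⟩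
    with hPp
  set Q : ℕ → (Fin (n - d) → ℤ) :=
    fun i => fun j : Fin (n - d) => v i ⟨d + (j : ℕ), by have := j.isLt; omega⟩ with hQdef
  have hvq_eq : ∀ i, vq n d (v i) = fun j => ((Q i j : ℝ)) := fun i => rfl
  have hqne : ∀ i, N ≤ i → Q i ≠ 0 := by
    intro i hi hc0
    have hvq0 : vq n d (v i) = 0 := by
      rw [hvq_eq i, hc0]; funext j; simp
    have herr : errV n d hdn' A (v i) = vp n d hdn' (v i) := by
      rw [errV, hvq0, Matrix.mulVec_zero, zero_add]
    obtain ⟨w, hw⟩ : ∃ w, v i w ≠ 0 := by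
      by_contra hc; push_neg at hc; exact hv i (funext hc)
    by_cases hwd : (w : ℕ) < d
    · have h1 : (1 : ℝ) ≤ |((v i w : ℝ))| := by
        rw [← Int.cast_abs]; exact_mod_cast Int.one_le_abs hw
      have h2 : |((v i w : ℝ))| ≤ ‖errV n d hdn' A (v i)‖ := by
        rw [herr]
        have : ((v i w : ℝ)) = vp n d hdn' (v i) ⟨(w : ℕ), hwd⟩ := by
          show _ = ((v i ⟨(w : ℕ), _⟩ : ℝ))
          congr 1
        rw [this, ← Real.norm_eq_abs]
        exact norm_le_pi_norm _ _
      have h3 := le_trans (le_trans h1 h2) (hE i)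
      have h4 := hN i hi
      linarith
    · apply hw
      have : v i w = Q i ⟨(w : ℕ) - d, by have := w.isLt; omega⟩ := by
        rw [hQdef]
        exact congrArg (v i) (Fin.ext (by simp; omega))
      rw [this, hc0]; rfl
  set C : ℝ := R * R ^ Rr with hCdef
  have hC : 0 < C := mul_pos hR (Real.rpow_pos_of_pos hR _)
  refine ⟨C, hC, ?_⟩
  set S := {pq : (Fin d → ℤ) × (Fin (n - d) → ℤ) |
    ‖A.mulVec (fun j => ((pq.2 j : ℝ))) + (fun i => ((pq.1 i : ℝ)))‖
      ≤ C * ‖(fun j => ((pq.2 j : ℝ)) : Fin (n - d) → ℝ)‖ ^ (-Rr)} with hSdef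
  show S.Infinite
  have hmem : ∀ i, N ≤ i → (Pp i, Q i) ∈ S := by
    intro i hi
    have hq1 : (1 : ℝ) ≤ ‖(fun j => ((Q i j : ℝ)) : Fin (n - d) → ℝ)‖ :=
      int_one_le_norm (Q i) (hqne i hi)
    have hqpos : (0 : ℝ) < ‖(fun j => ((Q i j : ℝ)) : Fin (n - d) → ℝ)‖ := lt_of_lt_of_le one_pos hq1
    have herr : (A.mulVec (fun j => ((Q i j : ℝ))) + (fun k => ((Pp i k : ℝ))))
        = errV n d hdn' A (v i) := rfl
    show ‖A.mulVec (fun j => ((Q i j : ℝ))) + (fun k => ((Pp i k : ℝ)))‖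
      ≤ C * ‖(fun j => ((Q i j : ℝ)) : Fin (n - d) → ℝ)‖ ^ (-Rr)
    rw [herr]
    have hqe : Real.exp (-(((d : ℝ) - r) * t i))
        ≤ R / ‖(fun j => ((Q i j : ℝ)) : Fin (n - d) → ℝ)‖ := by
      rw [le_div_iff₀ hqpos]
      have h1 : ‖(fun j => ((Q i j : ℝ)) : Fin (n - d) → ℝ)‖ ≤ R * Real.exp (((d : ℝ) - r) * t i) := by
        rw [← hvq_eq i]; exact hQ i
      calc Real.exp (-(((d : ℝ) - r) * t i)) * ‖(fun j => ((Q i j : ℝ)) : Fin (n - d) → ℝ)‖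
          ≤ Real.exp (-(((d : ℝ) - r) * t i)) * (R * Real.exp (((d : ℝ) - r) * t i)) :=
            mul_le_mul_of_nonneg_left h1 (Real.exp_pos _).le
        _ = R * (Real.exp (-(((d : ℝ) - r) * t i)) * Real.exp (((d : ℝ) - r) * t i)) := by ring
        _ = R := by rw [← Real.exp_add]; simp
    have hkey : Real.exp (-(((n : ℝ) - d + r) * t i))
        ≤ R ^ Rr * ‖(fun j => ((Q i j : ℝ)) : Fin (n - d) → ℝ)‖ ^ (-Rr) := by
      have h1 : Real.exp (-(((n : ℝ) - d + r) * t i))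
          = (Real.exp (-(((d : ℝ) - r) * t i))) ^ Rr := by
        rw [exp_rpow']; congr 1
        rw [← hprod]; ring
      rw [h1]
      calc (Real.exp (-(((d : ℝ) - r) * t i))) ^ Rr
          ≤ (R / ‖(fun j => ((Q i j : ℝ)) : Fin (n - d) → ℝ)‖) ^ Rr :=
            Real.rpow_le_rpow (Real.exp_pos _).le hqe hRr.le
        _ = R ^ Rr * ‖(fun j => ((Q i j : ℝ)) : Fin (n - d) → ℝ)‖ ^ (-Rr) := by
            rw [Real.div_rpow hR.le (norm_nonneg _), Real.rpow_neg (norm_nonneg _),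
              div_eq_mul_inv]
    calc ‖errV n d hdn' A (v i)‖
        ≤ R * Real.exp (-(((n : ℝ) - d + r) * t i)) := hE i
      _ ≤ R * (R ^ Rr * ‖(fun j => ((Q i j : ℝ)) : Fin (n - d) → ℝ)‖ ^ (-Rr)) :=
            mul_le_mul_of_nonneg_left hkey hR.le
      _ = C * ‖(fun j => ((Q i j : ℝ)) : Fin (n - d) → ℝ)‖ ^ (-Rr) := by rw [hCdef]; ring
  set f : ℕ → (Fin d → ℤ) × (Fin (n - d) → ℤ) := fun i => (Pp i, Q i) with hf
  by_cases himg : (f '' Set.Ici N).Infinite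
  · refine himg.mono ?_
    rintro y ⟨i, hi, rfl⟩
    exact hmem i hi
  · rw [Set.not_infinite] at himg
    obtain ⟨y, hy⟩ := pigeonhole_fiber f (Set.Ici_infinite N) himg
    obtain ⟨i₁, hi₁⟩ := hy.nonempty
    have hyfi : f i₁ = y := hi₁.2
    have hy2ne : y.2 ≠ 0 := by
      rw [← hyfi]; exact hqne i₁ hi₁.1
    set E := A.mulVec (fun j => ((y.2 j : ℝ))) + (fun k => ((y.1 k : ℝ))) with hEdef
    have hE0 : E = 0 := by
      by_contra hEne
      have hnormpos : 0 < ‖E‖ := norm_pos_iff.mpr hEne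
      obtain ⟨M, hM⟩ := hsmall ‖E‖ hnormpos
      obtain ⟨i₂, hi₂mem, hi₂gt⟩ := hy.exists_gt (max M N)
      have hfi₂ : f i₂ = y := hi₂mem.2
      have hEerr : E = errV n d hdn' A (v i₂) := by
        rw [hEdef, ← hfi₂]; rfl
      have h1 : ‖E‖ ≤ R * Real.exp (-(((n : ℝ) - d + r) * t i₂)) := by
        rw [hEerr]; exact hE i₂
      have h2 := hM i₂ (le_of_lt (lt_of_le_of_lt (le_max_left M N) hi₂gt))
      linarith
    obtain ⟨j₀, hj₀⟩ : ∃ j₀, y.2 j₀ ≠ 0 := by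
      by_contra hc; push_neg at hc; exact hy2ne (funext hc)
    apply Set.infinite_of_injective_forall_mem
      (f := fun k : ℤ => ((k • y.1, k • y.2) : (Fin d → ℤ) × (Fin (n - d) → ℤ)))
    · intro a b hab
      have h1 : a * y.2 j₀ = b * y.2 j₀ := by
        have h2 := congrArg (fun pq : (Fin d → ℤ) × (Fin (n - d) → ℤ) => pq.2 j₀) hab
        simpa using h2
      exact mul_right_cancel₀ hj₀ h1
    · intro k
      show ‖A.mulVec (fun j => (((k • y.2) j : ℝ))) + (fun i => (((k • y.1) i : ℝ)))‖
        ≤ C * ‖(fun j => (((k • y.2) j : ℝ)) : Fin (n - d) → ℝ)‖ ^ (-Rr)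
      have hc2 : (fun j => (((k • y.2) j : ℝ)) : Fin (n - d) → ℝ)
          = (k : ℝ) • (fun j => ((y.2 j : ℝ))) := by
        funext j; simp [Pi.smul_apply]
      have hc1 : (fun i => (((k • y.1) i : ℝ)) : Fin d → ℝ)
          = (k : ℝ) • (fun i => ((y.1 i : ℝ))) := by
        funext i; simp [Pi.smul_apply]
      have hzero : A.mulVec (fun j => (((k • y.2) j : ℝ))) + (fun i => (((k • y.1) i : ℝ)))
          = (k : ℝ) • E := by
        rw [hc1, hc2, Matrix.mulVec_smul, hEdef, smul_add]
      rw [hzero, hE0, smul_zero, norm_zero]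
      positivity

lemma one_to_two (n d : ℕ) (hn : 3 ≤ n) (hd : 2 ≤ d) (hdn : d ≤ n - 1)
    (r : ℝ) (hr0 : 0 < r) (hrd : r < d) (A : Matrix (Fin d) (Fin (n - d)) ℝ)
    (h : MemW (((n : ℝ) - d + r) / (d - r)) A) :
    Prop2 n d (lt_of_lt_of_le two_pos hd) (le_trans hdn (Nat.sub_le n 1)) r A := by
  have hdn' : d ≤ n := by omega
  have hd0 : 0 < d := by omega
  have hdr : 0 < (d : ℝ) - r := by linarith
  have hd1n : (d : ℝ) + 1 ≤ n := by exact_mod_cast (by omega : d + 1 ≤ n)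
  have hnd : 0 < (n : ℝ) - d + r := by linarith
  set Rr : ℝ := ((n : ℝ) - d + r) / ((d : ℝ) - r) with hRrdef
  have hRr : 0 < Rr := div_pos hnd hdr
  have hprod : ((d : ℝ) - r) * Rr = (n : ℝ) - d + r := by
    rw [hRrdef]; field_simp
  obtain ⟨C, hC, hinf⟩ := h
  set S := {pq : (Fin d → ℤ) × (Fin (n - d) → ℤ) |
    ‖A.mulVec (fun j => ((pq.2 j : ℝ))) + (fun i => ((pq.1 i : ℝ)))‖
      ≤ C * ‖(fun j => ((pq.2 j : ℝ)) : Fin (n - d) → ℝ)‖ ^ (-Rr)} with hSdef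
  have hinf' : S.Infinite := hinf
  set MA : ℝ := ∑ i, ∑ j, |A i j| with hMA
  have hMA0 : 0 ≤ MA := by positivity
  -- unboundedness of `q` on S
  have hub : ∀ M : ℕ, ∃ pq ∈ S, (M : ℝ) < ‖(fun j => ((pq.2 j : ℝ)) : Fin (n - d) → ℝ)‖ := by
    intro M
    by_contra hc
    push_neg at hc
    apply hinf'
    have hsub : S ⊆ {p : Fin d → ℤ | ∀ i, |((p i : ℝ))| ≤ C + MA * M} ×ˢ
        {q : Fin (n - d) → ℤ | ∀ j, |((q j : ℝ))| ≤ M} := by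
      intro pq hpq
      have hq := hc pq hpq
      have hqj : ∀ j, |((pq.2 j : ℝ))| ≤ (M : ℝ) := by
        intro j
        calc |((pq.2 j : ℝ))| ≤ ‖(fun j => ((pq.2 j : ℝ)) : Fin (n - d) → ℝ)‖ := by
              rw [← Real.norm_eq_abs]; exact norm_le_pi_norm (fun j => ((pq.2 j : ℝ))) j
          _ ≤ M := hq
      have hqnorm : ‖(fun j => ((pq.2 j : ℝ)) : Fin (n - d) → ℝ)‖ ^ (-Rr) ≤ 1 := by
        by_cases hq0 : pq.2 = 0
        · have : (fun j => ((pq.2 j : ℝ)) : Fin (n - d) → ℝ) = 0 := by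
            funext j; rw [hq0]; simp
          rw [this, norm_zero, Real.zero_rpow (by intro hcon; rw [neg_eq_zero] at hcon; exact hRr.ne' hcon)]
          norm_num
        · exact Real.rpow_le_one_of_one_le_of_nonpos (int_one_le_norm _ hq0) (by linarith)
      have herr : ‖A.mulVec (fun j => ((pq.2 j : ℝ))) + (fun i => ((pq.1 i : ℝ)))‖ ≤ C := by
        calc ‖A.mulVec (fun j => ((pq.2 j : ℝ))) + (fun i => ((pq.1 i : ℝ)))‖
            ≤ C * ‖(fun j => ((pq.2 j : ℝ)) : Fin (n - d) → ℝ)‖ ^ (-Rr) := hpq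
          _ ≤ C * 1 := mul_le_mul_of_nonneg_left hqnorm hC.le
          _ = C := mul_one C
      constructor
      · intro i
        have h1 : |((pq.1 i : ℝ))| ≤ |(A.mulVec (fun j => ((pq.2 j : ℝ))) + (fun i => ((pq.1 i : ℝ)))) i|
            + |A.mulVec (fun j => ((pq.2 j : ℝ))) i| := by
          have : ((pq.1 i : ℝ)) = (A.mulVec (fun j => ((pq.2 j : ℝ))) + (fun i => ((pq.1 i : ℝ)))) i
              - A.mulVec (fun j => ((pq.2 j : ℝ))) i := by simp
          rw [this]
          exact abs_sub _ _
        have h2 : |(A.mulVec (fun j => ((pq.2 j : ℝ))) + (fun i => ((pq.1 i : ℝ)))) i| ≤ C := by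
          rw [← Real.norm_eq_abs]
          exact le_trans (norm_le_pi_norm _ i) herr
        have h3 : |A.mulVec (fun j => ((pq.2 j : ℝ))) i| ≤ MA * M := by
          rw [← Real.norm_eq_abs]
          calc ‖A.mulVec (fun j => ((pq.2 j : ℝ))) i‖
              ≤ ‖A.mulVec (fun j => ((pq.2 j : ℝ)) : Fin (n - d) → ℝ)‖ := norm_le_pi_norm _ i
            _ ≤ MA * ‖(fun j => ((pq.2 j : ℝ)) : Fin (n - d) → ℝ)‖ := mulVec_norm_le A _
            _ ≤ MA * M := mul_le_mul_of_nonneg_left hq hMA0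
        linarith
      · exact hqj
    exact Set.Finite.subset (Set.Finite.prod (finite_int_bdd _) (finite_int_bdd _)) hsub
  choose seq hseqS hseqN using hub
  -- the sequences
  set t : ℕ → ℝ := fun i =>
    Real.log ‖(fun j => (((seq i).2 j : ℝ)) : Fin (n - d) → ℝ)‖ / ((d : ℝ) - r) with htdef
  set v : ℕ → (Fin n → ℤ) := fun i => fun w : Fin n =>
    if hw : (w : ℕ) < d then (seq i).1 ⟨(w : ℕ), hw⟩
    else (seq i).2 ⟨(w : ℕ) - d, by have := w.isLt; omega⟩ with hvdef
  have hQnorm : ∀ i : ℕ, (i : ℝ) < ‖(fun j => (((seq i).2 j : ℝ)) : Fin (n - d) → ℝ)‖ := hseqN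
  have hQpos : ∀ i : ℕ, (0 : ℝ) < ‖(fun j => (((seq i).2 j : ℝ)) : Fin (n - d) → ℝ)‖ :=
    fun i => lt_of_le_of_lt (Nat.cast_nonneg i) (hQnorm i)
  have hexp_t : ∀ i : ℕ, Real.exp (((d : ℝ) - r) * t i)
      = ‖(fun j => (((seq i).2 j : ℝ)) : Fin (n - d) → ℝ)‖ := by
    intro i
    rw [htdef]
    have : ((d : ℝ) - r) * (Real.log ‖(fun j => (((seq i).2 j : ℝ)) : Fin (n - d) → ℝ)‖ / ((d : ℝ) - r))
        = Real.log ‖(fun j => (((seq i).2 j : ℝ)) : Fin (n - d) → ℝ)‖ := by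
      field_simp
    rw [this, Real.exp_log (hQpos i)]
  -- vq and vp of v i
  have hvq : ∀ i, vq n d (v i) = fun j => (((seq i).2 j : ℝ)) := by
    intro i
    funext j
    show ((v i ⟨d + (j : ℕ), _⟩ : ℝ)) = (((seq i).2 j : ℝ))
    congr 1
    simp only [hvdef]
    rw [dif_neg (by simp)]
    exact congrArg (seq i).2 (Fin.ext (by show d + (j : ℕ) - d = (j : ℕ); omega))
  have hvp : ∀ i, vp n d hdn' (v i) = fun k => (((seq i).1 k : ℝ)) := by
    intro i
    funext k
    show ((v i ⟨(k : ℕ), _⟩ : ℝ)) = (((seq i).1 k : ℝ))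
    congr 1
    simp only [hvdef]
    rw [dif_pos k.isLt]
  have herrV : ∀ i, errV n d hdn' A (v i)
      = A.mulVec (fun j => (((seq i).2 j : ℝ))) + (fun k => (((seq i).1 k : ℝ))) := by
    intro i
    rw [errV, hvq, hvp]
  refine ⟨max C 1, lt_of_lt_of_le one_pos (le_max_right C 1), t, ?_, v, ?_, ?_⟩
  · -- tendsto
    rw [tendsto_atTop]
    intro b
    rw [eventually_atTop]
    refine ⟨⌈Real.exp (b * ((d : ℝ) - r))⌉₊, fun i hi => ?_⟩
    have h1 : Real.exp (b * ((d : ℝ) - r)) ≤ (i : ℝ) :=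
      le_trans (Nat.le_ceil _) (Nat.cast_le.mpr hi)
    have h2 : Real.exp (b * ((d : ℝ) - r))
        ≤ ‖(fun j => (((seq i).2 j : ℝ)) : Fin (n - d) → ℝ)‖ := le_trans h1 (hQnorm i).le
    have h3 : b * ((d : ℝ) - r) ≤ Real.log ‖(fun j => (((seq i).2 j : ℝ)) : Fin (n - d) → ℝ)‖ := by
      have := Real.log_le_log (Real.exp_pos _) h2
      rwa [Real.log_exp] at this
    rw [htdef]
    rw [le_div_iff₀ hdr]
    linarith
  · -- nonzero
    intro i hc
    have h1 : vq n d (v i) = 0 := by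
      rw [hvq]
      funext j
      have : v i ⟨d + (j : ℕ), by have := j.isLt; omega⟩ = 0 := by rw [hc]; rfl
      show (((seq i).2 j : ℝ)) = 0
      simp only [hvdef, Pi.zero_apply] at this ⊢
      rw [dif_neg (by simp)] at this
      have h2 : (seq i).2 j = 0 := by
        rw [← this]
        exact congrArg (seq i).2 (Fin.ext (by show (j : ℕ) = d + (j : ℕ) - d; omega))
      rw [h2]; simp
    have := hQpos i
    rw [← hvq i, h1, norm_zero] at this
    exact lt_irrefl 0 this
  · -- the bound
    intro i
    have hq1 : (1 : ℝ) ≤ ‖(fun j => (((seq i).2 j : ℝ)) : Fin (n - d) → ℝ)‖ := by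
      have hqne : (seq i).2 ≠ 0 := by
        intro hc
        have := hQpos i
        rw [hc] at this
        simp at this
        exact this rfl
      exact int_one_le_norm _ hqne
    have ht0 : 0 ≤ t i := by
      rw [htdef]
      apply div_nonneg _ hdr.le
      exact Real.log_nonneg hq1
    -- error bound
    have hmem := hseqS i
    rw [hSdef, Set.mem_setOf_eq] at hmem
    have hrpow : ‖(fun j => (((seq i).2 j : ℝ)) : Fin (n - d) → ℝ)‖ ^ (-Rr)
        = Real.exp (-(((n : ℝ) - d + r) * t i)) := by
      rw [← hexp_t i, exp_rpow']
      congr 1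
      rw [← hprod]; ring
    have hEb : ‖errV n d hdn' A (v i)‖ ≤ C * Real.exp (-(((n : ℝ) - d + r) * t i)) := by
      rw [herrV i, ← hrpow]
      exact hmem
    have hQb : ‖vq n d (v i)‖ ≤ Real.exp (((d : ℝ) - r) * t i) := by
      rw [hvq i, hexp_t i]
    have hfin := norm_bt_le n d hd0 hdn' A (t i) (v i) _ _ hEb hQb
    refine le_trans hfin ?_
    apply max_le
    · have h1 : Real.exp (((n : ℝ) - d) * t i) * (C * Real.exp (-(((n : ℝ) - d + r) * t i)))
          = C * Real.exp (-(r * t i)) := by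
        rw [mul_comm, mul_assoc, ← Real.exp_add]
        congr 2
        ring
      rw [h1]
      exact mul_le_mul_of_nonneg_right (le_max_left C 1) (Real.exp_pos _).le
    · have h1 : Real.exp (-((d : ℝ) * t i)) * Real.exp (((d : ℝ) - r) * t i)
          = Real.exp (-(r * t i)) := by
        rw [← Real.exp_add]; congr 1; ring
      rw [h1]
      calc Real.exp (-(r * t i)) = 1 * Real.exp (-(r * t i)) := by ring
        _ ≤ max C 1 * Real.exp (-(r * t i)) :=
            mul_le_mul_of_nonneg_right (le_max_right C 1) (Real.exp_pos _).le

lemma abs_entry_le {m l : Type*} [Fintype m] [Fintype l] (M : Matrix m l ℝ) (i : m) (j : l) :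
    |M i j| ≤ ∑ a, ∑ b, |M a b| := by
  calc |M i j| ≤ ∑ b, |M i b| :=
        Finset.single_le_sum (f := fun b => |M i b|) (fun b _ => abs_nonneg _) (Finset.mem_univ j)
    _ ≤ ∑ a, ∑ b, |M a b| :=
        Finset.single_le_sum (f := fun a => ∑ b, |M a b|)
          (fun a _ => by positivity) (Finset.mem_univ i)

lemma exists_entry_bound (n : ℕ) (Ω : Set (SLn n)) (hΩc : IsCompact Ω) (hΩne : Ω.Nonempty) :
    ∃ B : ℝ, 1 ≤ B ∧ ∀ ω ∈ Ω, (∑ a, ∑ b, |((ω : SLn n) : Matrix (Fin n) (Fin n) ℝ) a b|) ≤ B := by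
  have hcoe : Continuous (fun g : SLn n => (g : Matrix (Fin n) (Fin n) ℝ)) :=
    continuous_induced_dom
  have hcont : Continuous (fun ω : SLn n =>
      ∑ a, ∑ b, |((ω : SLn n) : Matrix (Fin n) (Fin n) ℝ) a b|) := by
    apply continuous_finset_sum
    intro a _
    apply continuous_finset_sum
    intro b _
    exact (hcoe.matrix_elem a b).abs
  obtain ⟨ω₁, hω₁, hmax⟩ := hΩc.exists_isMaxOn hΩne hcont.continuousOn
  refine ⟨max 1 (∑ a, ∑ b, |((ω₁ : SLn n) : Matrix (Fin n) (Fin n) ℝ) a b|), le_max_left _ _,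
    fun ω hω => le_trans (hmax hω) (le_max_right _ _)⟩

lemma mulVec_row0_split (n d : ℕ) (hdn : d ≤ n) (hn0 : 0 < n)
    (M : Matrix (Fin n) (Fin n) ℝ)
    (hrow : ∀ j : Fin n, d ≤ (j : ℕ) → M ⟨0, hn0⟩ j = 0) (y : Fin n → ℝ) :
    M.mulVec y ⟨0, hn0⟩
      = ∑ k : Fin d, M ⟨0, hn0⟩ (Fin.castLE hdn k) * y (Fin.castLE hdn k) := by
  have hnd : d + (n - d) = n := by omega
  set e : (Fin d ⊕ Fin (n - d)) ≃ Fin n := finSumFinEquiv.trans (finCongr hnd) with he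
  have key : M.mulVec y ⟨0, hn0⟩ = ∑ j : Fin n, M ⟨0, hn0⟩ j * y j := rfl
  rw [key, ← Equiv.sum_comp e (fun j => M ⟨0, hn0⟩ j * y j), Fintype.sum_sum_type]
  have h2 : ∀ j : Fin (n - d), M ⟨0, hn0⟩ (e (Sum.inr j)) * y (e (Sum.inr j)) = 0 := by
    intro j
    have hval : ((e (Sum.inr j) : Fin n) : ℕ) = d + (j : ℕ) := by simp [he]
    rw [hrow (e (Sum.inr j)) (by omega), zero_mul]
  rw [Finset.sum_congr rfl (fun j _ => h2 j), Finset.sum_const_zero, add_zero]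
  apply Finset.sum_congr rfl
  intro k _
  have : e (Sum.inl k) = Fin.castLE hdn k := Fin.ext (by simp [he])
  rw [this]

lemma biSup_le_helper {α : Type*} (Ω : Set α) (f : α → ℝ) (M : ℝ) (hM : 0 ≤ M)
    (h : ∀ ω ∈ Ω, f ω ≤ M) : (⨆ ω ∈ Ω, f ω) ≤ M :=
  Real.iSup_le (fun ω => Real.iSup_le (fun hω => h ω hω) hM) hM

lemma le_biSup_helper {α : Type*} (Ω : Set α) (f : α → ℝ) (M : ℝ)
    (h : ∀ ω ∈ Ω, f ω ≤ M) {ω₀ : α} (hω₀ : ω₀ ∈ Ω) : f ω₀ ≤ ⨆ ω ∈ Ω, f ω := by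
  have h1 : f ω₀ = ⨆ (_ : ω₀ ∈ Ω), f ω₀ :=
    (ciSup_pos (f := fun _ : ω₀ ∈ Ω => f ω₀) hω₀).symm
  rw [h1]
  apply le_ciSup (f := fun ω => ⨆ (_ : ω ∈ Ω), f ω)
  refine ⟨max M 0, ?_⟩
  rintro y ⟨ω, rfl⟩
  show (⨆ (_ : ω ∈ Ω), f ω) ≤ max M 0
  by_cases hω : ω ∈ Ω
  · rw [ciSup_pos hω]
    exact le_max_of_le_left (h ω hω)
  · haveI : IsEmpty (ω ∈ Ω) := ⟨hω⟩
    rw [Real.iSup_of_isEmpty]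
    exact le_max_right M 0

lemma gA_mulVec_int (n d : ℕ) (hdn : d ≤ n) (A : Matrix (Fin d) (Fin (n - d)) ℝ)
    (v : Fin n → ℤ) (i : Fin n) :
    ((gA n d A : SLn n) : Matrix (Fin n) (Fin n) ℝ).mulVec (fun j => ((v j : ℝ))) i =
      if h : (i : ℕ) < d then errV n d hdn A v ⟨(i : ℕ), h⟩
      else vq n d v ⟨(i : ℕ) - d, by have := i.isLt; omega⟩ := by
  rw [gA_mulVec n d hdn A _ i]
  by_cases h : (i : ℕ) < d
  · rw [dif_pos h, dif_pos h, errV_apply]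
  · rw [dif_neg h, dif_neg h]
    show ((v i : ℝ)) = ((v ⟨d + ((i : ℕ) - d), by have := i.isLt; omega⟩ : ℤ) : ℝ)
    congr 1
    exact congrArg v (Fin.ext (by show (i : ℕ) = d + ((i : ℕ) - d); omega))

lemma components' (n d : ℕ) (hd0 : 0 < d) (hdn : d ≤ n)
    (A : Matrix (Fin d) (Fin (n - d)) ℝ) (R r t : ℝ) (v : Fin n → ℤ)
    (h : ‖((btFlow n d hd0 hdn (d * t) * gA n d A : SLn n) :
        Matrix (Fin n) (Fin n) ℝ).mulVec (fun j => ((v j : ℝ)))‖ ≤ R * Real.exp (-(r * t))) :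
    ‖errV n d hdn A v‖ ≤ R * Real.exp (-(((n : ℝ) - d + r) * t)) ∧
      ‖vq n d v‖ ≤ R * Real.exp (((d : ℝ) - r) * t) := by
  obtain ⟨h1, h2⟩ := components_of_norm_bt n d hd0 hdn A t v _ h
  constructor
  · calc ‖errV n d hdn A v‖
        ≤ Real.exp (-(((n : ℝ) - d) * t)) * (R * Real.exp (-(r * t))) := h1
      _ = R * (Real.exp (-(((n : ℝ) - d) * t)) * Real.exp (-(r * t))) := by ring
      _ = R * Real.exp (-(((n : ℝ) - d + r) * t)) := by
          rw [← Real.exp_add]; congr 1; ring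
  · calc ‖vq n d v‖
        ≤ Real.exp ((d : ℝ) * t) * (R * Real.exp (-(r * t))) := h2
      _ = R * (Real.exp ((d : ℝ) * t) * Real.exp (-(r * t))) := by ring
      _ = R * Real.exp (((d : ℝ) - r) * t) := by rw [← Real.exp_add]; congr 1; ring

lemma triple_mulVec (n d : ℕ) (hn0 : 0 < n) (t : ℝ) (ω : SLn n)
    (A : Matrix (Fin d) (Fin (n - d)) ℝ) (x : Fin n → ℝ) :
    ((gtFlow n hn0 t * ω * gA n d A : SLn n) : Matrix (Fin n) (Fin n) ℝ).mulVec x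
      = ((gtFlow n hn0 t : SLn n) : Matrix (Fin n) (Fin n) ℝ).mulVec
          (((ω : SLn n) : Matrix (Fin n) (Fin n) ℝ).mulVec
            (((gA n d A : SLn n) : Matrix (Fin n) (Fin n) ℝ).mulVec x)) := by
  rw [Matrix.SpecialLinearGroup.coe_mul, Matrix.SpecialLinearGroup.coe_mul,
    Matrix.mulVec_mulVec, Matrix.mulVec_mulVec]

lemma gt_mulVec (n : ℕ) (hn0 : 0 < n) (t : ℝ) (z : Fin n → ℝ) (i : Fin n) :
    ((gtFlow n hn0 t : SLn n) : Matrix (Fin n) (Fin n) ℝ).mulVec z i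
      = if (i : ℕ) = 0 then Real.exp (((n : ℝ) - 1) * t) * z i else Real.exp (-t) * z i := by
  have hcoe : ((gtFlow n hn0 t : SLn n) : Matrix (Fin n) (Fin n) ℝ)
      = Matrix.diagonal (fun i : Fin n =>
          if (i : ℕ) = 0 then Real.exp (((n : ℝ) - 1) * t) else Real.exp (-t)) := rfl
  rw [hcoe, Matrix.mulVec_diagonal]
  by_cases h : (i : ℕ) = 0
  · rw [if_pos h, if_pos h]
  · rw [if_neg h, if_neg h]

lemma span_bound (d : ℕ) (W : Set (Fin d → ℝ)) (hspan : Submodule.span ℝ W = ⊤) :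
    ∃ (c : ℝ) (w : Fin d → (Fin d → ℝ)), 0 ≤ c ∧ (∀ k, w k ∈ W) ∧
      ∀ x : Fin d → ℝ, ‖x‖ ≤ c * ‖(fun k => ∑ i, w k i * x i : Fin d → ℝ)‖ := by
  obtain ⟨b, hbW, hbspan, hbli⟩ := exists_linearIndependent ℝ W
  rw [hspan] at hbspan
  have hsp : ⊤ ≤ Submodule.span ℝ (Set.range (Subtype.val : ↥b → (Fin d → ℝ))) := by
    rw [Subtype.range_coe, hbspan]
  set bas : Module.Basis ↥b ℝ (Fin d → ℝ) := Module.Basis.mk hbli hsp with hbas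
  haveI : Fintype ↥b := FiniteDimensional.fintypeBasisIndex bas
  have hcard : Fintype.card ↥b = d := by
    have h1 := Module.finrank_eq_card_basis bas
    rw [Module.finrank_pi, Fintype.card_fin] at h1
    omega
  set eb : ↥b ≃ Fin d := Fintype.equivFinOfCardEq hcard with heb
  set w : Fin d → (Fin d → ℝ) := fun k => ((eb.symm k : ↥b) : Fin d → ℝ) with hw
  have hwW : ∀ k, w k ∈ W := fun k => hbW (eb.symm k).2
  set T : (Fin d → ℝ) →ₗ[ℝ] (Fin d → ℝ) := (Matrix.of w).mulVecLin with hT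
  have hTapp : ∀ x, T x = fun k => ∑ i, w k i * x i := fun x => rfl
  have hinj : Function.Injective T := by
    rw [← LinearMap.ker_eq_bot, LinearMap.ker_eq_bot']
    intro x hx
    have hdot : ∀ u ∈ b, ∑ i, u i * x i = 0 := by
      intro u hu
      have h1 : w (eb ⟨u, hu⟩) = u := by
        rw [hw]
        simp
      have h2 := congrFun hx (eb ⟨u, hu⟩)
      rw [hTapp] at h2
      simp only [Pi.zero_apply] at h2
      rw [← h1]
      exact h2
    have hall : ∀ y, y ∈ Submodule.span ℝ b → ∑ i, y i * x i = 0 := by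
      intro y hy
      induction hy using Submodule.span_induction with
      | mem u hu => exact hdot u hu
      | zero => simp
      | add a c _ _ ha hc =>
          simp only [Pi.add_apply, add_mul, Finset.sum_add_distrib]
          rw [ha, hc, add_zero]
      | smul a y _ hy =>
          simp only [Pi.smul_apply, smul_eq_mul, mul_assoc, ← Finset.mul_sum]
          rw [hy, mul_zero]
    have hx0 : ∑ i, x i * x i = 0 := hall x (by rw [hbspan]; trivial)
    funext i
    have := (Finset.sum_eq_zero_iff_of_nonneg
      (fun i _ => mul_self_nonneg (x i))).mp hx0 i (Finset.mem_univ i)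
    simpa [mul_self_eq_zero] using this
  have hsurj : Function.Surjective T := LinearMap.injective_iff_surjective.mp hinj
  set eT := LinearEquiv.ofBijective T ⟨hinj, hsurj⟩ with heT
  set cl := LinearMap.toContinuousLinearMap (eT.symm.toLinearMap) with hcl
  refine ⟨‖cl‖, w, norm_nonneg _, hwW, fun x => ?_⟩
  have h1 : x = cl (T x) := by
    have : cl (T x) = eT.symm (eT x) := rfl
    rw [this, LinearEquiv.symm_apply_apply]
  calc ‖x‖ = ‖cl (T x)‖ := by rw [← h1]
    _ ≤ ‖cl‖ * ‖T x‖ := cl.le_opNorm (T x)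
    _ = ‖cl‖ * ‖(fun k => ∑ i, w k i * x i : Fin d → ℝ)‖ := by rw [hTapp]


def Prop3 (n d : ℕ) (hn0 : 0 < n) (r : ℝ) (A : Matrix (Fin d) (Fin (n - d)) ℝ)
    (Ω : Set (SLn n)) : Prop :=
  ∃ C : ℝ, 0 < C ∧ ∃ t : ℕ → ℝ, Tendsto t atTop atTop ∧
    ∃ v : ℕ → (Fin n → ℤ), (∀ i, v i ≠ 0) ∧ ∀ i,
      (⨆ ω ∈ Ω, ‖((gtFlow n hn0 (t i) * ω * gA n d A : SLn n) :
          Matrix (Fin n) (Fin n) ℝ).mulVec (fun j => ((v i j : ℝ)))‖)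
        ≤ C * Real.exp (((d : ℝ) - r - 1) * t i)

lemma two_to_three (n d : ℕ) (hn : 3 ≤ n) (hd : 2 ≤ d) (hdn : d ≤ n - 1)
    (r : ℝ) (hr0 : 0 < r) (hrd : r < d) (A : Matrix (Fin d) (Fin (n - d)) ℝ)
    (Ω : Set (SLn n)) (hΩc : IsCompact Ω) (hΩne : Ω.Nonempty)
    (hΩrow : ∀ ω ∈ Ω, ∀ j : Fin n, d ≤ (j : ℕ) →
      ((ω : SLn n) : Matrix (Fin n) (Fin n) ℝ) ⟨0, lt_of_lt_of_le (by norm_num) hn⟩ j = 0)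
    (h : Prop2 n d (lt_of_lt_of_le two_pos hd) (le_trans hdn (Nat.sub_le n 1)) r A) :
    Prop3 n d (lt_of_lt_of_le (by norm_num) hn) r A Ω := by
  have hdn' : d ≤ n := by omega
  have hd0 : 0 < d := by omega
  have hn0 : 0 < n := by omega
  have hdr : 0 < (d : ℝ) - r := by linarith
  have hd1n : (d : ℝ) + 1 ≤ n := by exact_mod_cast (by omega : d + 1 ≤ n)
  have hndr : 0 < (n : ℝ) - d + r := by linarith
  have hncast : (1 : ℝ) ≤ n := by exact_mod_cast (by omega : 1 ≤ n)
  have hdcast : (d : ℝ) ≤ n := by exact_mod_cast hdn'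
  obtain ⟨R, hR, t, ht, v, hv, hb⟩ := h
  obtain ⟨B, hB1, hB⟩ := exists_entry_bound n Ω hΩc hΩne
  have hB0 : 0 ≤ B := le_trans zero_le_one hB1
  obtain ⟨N, hN⟩ : ∃ N : ℕ, ∀ i, N ≤ i → 0 ≤ t i := by
    have hev := ht.eventually_ge_atTop 0
    rw [eventually_atTop] at hev
    exact hev
  refine ⟨(n : ℝ) * B * R, by positivity, fun i => t (i + N),
    ht.comp (tendsto_add_atTop_nat N), fun i => v (i + N), fun i => hv _, ?_⟩
  intro i
  set s := t (i + N) with hs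
  have hs0 : 0 ≤ s := hN _ (by omega)
  set u := v (i + N) with hu
  obtain ⟨hE, hQ⟩ := components' n d hd0 hdn' A R r s u (hb (i + N))
  set y := ((gA n d A : SLn n) : Matrix (Fin n) (Fin n) ℝ).mulVec (fun j => ((u j : ℝ)))
    with hy
  have hyk : ∀ k : Fin d, y (Fin.castLE hdn' k) = errV n d hdn' A u k := by
    intro k
    rw [hy, gA_mulVec_int n d hdn' A u]
    simp only [Fin.coe_castLE]
    rw [dif_pos k.isLt]
  have hynorm : ‖y‖ ≤ R * Real.exp (((d : ℝ) - r) * s) := by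
    rw [pi_norm_le_iff_of_nonneg (by positivity)]
    intro j
    rw [hy, gA_mulVec_int n d hdn' A u j]
    by_cases hj : (j : ℕ) < d
    · rw [dif_pos hj]
      calc ‖errV n d hdn' A u ⟨(j : ℕ), hj⟩‖ ≤ ‖errV n d hdn' A u‖ := norm_le_pi_norm _ _
        _ ≤ R * Real.exp (-(((n : ℝ) - d + r) * s)) := hE
        _ ≤ R * Real.exp (((d : ℝ) - r) * s) := by
            apply mul_le_mul_of_nonneg_left _ hR.le
            apply Real.exp_le_exp.mpr
            nlinarith
    · rw [dif_neg hj]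
      calc ‖vq n d u ⟨(j : ℕ) - d, _⟩‖ ≤ ‖vq n d u‖ := norm_le_pi_norm _ _
        _ ≤ R * Real.exp (((d : ℝ) - r) * s) := hQ
  apply biSup_le_helper _ _ _ (by positivity)
  intro ω hω
  rw [triple_mulVec, ← hy]
  set z := ((ω : SLn n) : Matrix (Fin n) (Fin n) ℝ).mulVec y with hz
  have hznorm : ‖z‖ ≤ B * ‖y‖ := by
    calc ‖z‖ ≤ (∑ a, ∑ b, |((ω : SLn n) : Matrix (Fin n) (Fin n) ℝ) a b|) * ‖y‖ :=
          mulVec_norm_le _ y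
      _ ≤ B * ‖y‖ := mul_le_mul_of_nonneg_right (hB ω hω) (norm_nonneg _)
  rw [pi_norm_le_iff_of_nonneg (by positivity)]
  intro j
  rw [gt_mulVec]
  by_cases hj : (j : ℕ) = 0
  · rw [if_pos hj]
    have hj0 : j = (⟨0, hn0⟩ : Fin n) := Fin.ext hj
    have hz0 : |z j| ≤ (d : ℝ) * B * ‖errV n d hdn' A u‖ := by
      rw [hj0, hz, mulVec_row0_split n d hdn' hn0 _ (hΩrow ω hω) y]
      calc |∑ k : Fin d, ((ω : SLn n) : Matrix (Fin n) (Fin n) ℝ) ⟨0, hn0⟩ (Fin.castLE hdn' k)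
              * y (Fin.castLE hdn' k)|
          ≤ ∑ k : Fin d, |((ω : SLn n) : Matrix (Fin n) (Fin n) ℝ) ⟨0, hn0⟩ (Fin.castLE hdn' k)
              * y (Fin.castLE hdn' k)| := Finset.abs_sum_le_sum_abs _ _
        _ ≤ ∑ _k : Fin d, B * ‖errV n d hdn' A u‖ := by
            apply Finset.sum_le_sum
            intro k _
            rw [abs_mul, hyk k]
            apply mul_le_mul (le_trans (abs_entry_le _ _ _) (hB ω hω)) _ (abs_nonneg _) hB0
            rw [← Real.norm_eq_abs]
            exact norm_le_pi_norm _ _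
        _ = (d : ℝ) * B * ‖errV n d hdn' A u‖ := by
            rw [Finset.sum_const, Finset.card_univ, Fintype.card_fin, nsmul_eq_mul]; ring
    rw [Real.norm_eq_abs, abs_mul, abs_of_pos (Real.exp_pos _)]
    calc Real.exp (((n : ℝ) - 1) * s) * |z j|
        ≤ Real.exp (((n : ℝ) - 1) * s) * ((d : ℝ) * B * (R * Real.exp (-(((n : ℝ) - d + r) * s)))) := by
          apply mul_le_mul_of_nonneg_left _ (Real.exp_pos _).le
          calc |z j| ≤ (d : ℝ) * B * ‖errV n d hdn' A u‖ := hz0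
            _ ≤ (d : ℝ) * B * (R * Real.exp (-(((n : ℝ) - d + r) * s))) := by
                apply mul_le_mul_of_nonneg_left hE (by positivity)
      _ = (d : ℝ) * B * R * (Real.exp (((n : ℝ) - 1) * s) * Real.exp (-(((n : ℝ) - d + r) * s))) := by
          ring
      _ = (d : ℝ) * B * R * Real.exp (((d : ℝ) - r - 1) * s) := by
          rw [← Real.exp_add]; congr 2; ring
      _ ≤ (n : ℝ) * B * R * Real.exp (((d : ℝ) - r - 1) * s) := by
          apply mul_le_mul_of_nonneg_right _ (Real.exp_pos _).le
          apply mul_le_mul_of_nonneg_right _ hR.le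
          exact mul_le_mul_of_nonneg_right hdcast hB0
  · rw [if_neg hj]
    rw [Real.norm_eq_abs, abs_mul, abs_of_pos (Real.exp_pos _)]
    calc Real.exp (-s) * |z j|
        ≤ Real.exp (-s) * (B * (R * Real.exp (((d : ℝ) - r) * s))) := by
          apply mul_le_mul_of_nonneg_left _ (Real.exp_pos _).le
          calc |z j| ≤ ‖z‖ := by rw [← Real.norm_eq_abs]; exact norm_le_pi_norm z j
            _ ≤ B * ‖y‖ := hznorm
            _ ≤ B * (R * Real.exp (((d : ℝ) - r) * s)) :=
                mul_le_mul_of_nonneg_left hynorm hB0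
      _ = B * R * (Real.exp (-s) * Real.exp (((d : ℝ) - r) * s)) := by ring
      _ = B * R * Real.exp (((d : ℝ) - r - 1) * s) := by
          rw [← Real.exp_add]; congr 2; ring
      _ ≤ (n : ℝ) * B * R * Real.exp (((d : ℝ) - r - 1) * s) := by
          apply mul_le_mul_of_nonneg_right _ (Real.exp_pos _).le
          have h9 : B * R ≤ (n : ℝ) * (B * R) :=
            le_mul_of_one_le_left (by positivity) hncast
          linarith


lemma three_to_two (n d : ℕ) (hn : 3 ≤ n) (hd : 2 ≤ d) (hdn : d ≤ n - 1)
    (r : ℝ) (hr0 : 0 < r) (hrd : r < d) (A : Matrix (Fin d) (Fin (n - d)) ℝ)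
    (Ω : Set (SLn n)) (hΩc : IsCompact Ω) (hΩne : Ω.Nonempty)
    (hΩrow : ∀ ω ∈ Ω, ∀ j : Fin n, d ≤ (j : ℕ) →
      ((ω : SLn n) : Matrix (Fin n) (Fin n) ℝ) ⟨0, lt_of_lt_of_le (by norm_num) hn⟩ j = 0)
    (hΩspan : Submodule.span ℝ
      {w : Fin d → ℝ | ∃ ω ∈ Ω, ∀ i : Fin d,
        w i = ((ω : SLn n) : Matrix (Fin n) (Fin n) ℝ) ⟨0, lt_of_lt_of_le (by norm_num) hn⟩
          (Fin.castLE (le_trans hdn (Nat.sub_le n 1)) i)} = ⊤)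
    (h : Prop3 n d (lt_of_lt_of_le (by norm_num) hn) r A Ω) :
    Prop2 n d (lt_of_lt_of_le two_pos hd) (le_trans hdn (Nat.sub_le n 1)) r A := by
  have hdn' : d ≤ n := by omega
  have hd0 : 0 < d := by omega
  have hn0 : 0 < n := by omega
  have hdr : 0 < (d : ℝ) - r := by linarith
  have hd1n : (d : ℝ) + 1 ≤ n := by exact_mod_cast (by omega : d + 1 ≤ n)
  have hndr : 0 < (n : ℝ) - d + r := by linarith
  obtain ⟨C, hC, t, ht, v, hv, hb⟩ := h
  obtain ⟨B, hB1, hB⟩ := exists_entry_bound n Ω hΩc hΩne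
  have hB0 : 0 ≤ B := le_trans zero_le_one hB1
  obtain ⟨c, w, hc0, hwW, hcmp⟩ := span_bound d _ hΩspan
  obtain ⟨ω₀, hω₀⟩ := hΩne
  set B₀ : ℝ := ∑ a, ∑ b, |(((ω₀⁻¹ : SLn n) : SLn n) : Matrix (Fin n) (Fin n) ℝ) a b| with hB₀
  have hB₀0 : 0 ≤ B₀ := by positivity
  obtain ⟨N, hN⟩ : ∃ N : ℕ, ∀ i, N ≤ i → 0 ≤ t i := by
    have hev := ht.eventually_ge_atTop 0
    rw [eventually_atTop] at hev
    exact hev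
  have hR' : 0 < (max c B₀ + 1) * C := by
    apply mul_pos _ hC
    have : (0 : ℝ) ≤ max c B₀ := le_trans hc0 (le_max_left _ _)
    linarith
  refine ⟨(max c B₀ + 1) * C, hR', fun i => t (i + N),
    ht.comp (tendsto_add_atTop_nat N), fun i => v (i + N), fun i => hv _, ?_⟩
  intro i
  set s := t (i + N) with hs
  have hs0 : 0 ≤ s := hN _ (by omega)
  set u := v (i + N) with hu
  set y := ((gA n d A : SLn n) : Matrix (Fin n) (Fin n) ℝ).mulVec (fun j => ((u j : ℝ)))
    with hy
  have hyk : ∀ k : Fin d, y (Fin.castLE hdn' k) = errV n d hdn' A u k := by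
    intro k
    rw [hy, gA_mulVec_int n d hdn' A u]
    simp only [Fin.coe_castLE]
    rw [dif_pos k.isLt]
  set f : SLn n → ℝ := fun ω => ‖((gtFlow n hn0 s * ω * gA n d A : SLn n) :
      Matrix (Fin n) (Fin n) ℝ).mulVec (fun j => ((u j : ℝ)))‖ with hf
  have hfz : ∀ ω : SLn n, f ω = ‖((gtFlow n hn0 s : SLn n) :
      Matrix (Fin n) (Fin n) ℝ).mulVec
        (((ω : SLn n) : Matrix (Fin n) (Fin n) ℝ).mulVec y)‖ := by
    intro ω
    simp only [hf]
    rw [triple_mulVec, hy]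
  -- uniform bound on Ω
  have hub : ∀ ω ∈ Ω, f ω ≤ max (Real.exp (((n : ℝ) - 1) * s)) (Real.exp (-s)) * (B * ‖y‖) := by
    intro ω hω
    have hmax0 : 0 ≤ max (Real.exp (((n : ℝ) - 1) * s)) (Real.exp (-s)) :=
      le_trans (Real.exp_pos _).le (le_max_left _ _)
    rw [hfz]
    have hznorm : ‖((ω : SLn n) : Matrix (Fin n) (Fin n) ℝ).mulVec y‖ ≤ B * ‖y‖ :=
      le_trans (mulVec_norm_le _ y)
        (mul_le_mul_of_nonneg_right (hB ω hω) (norm_nonneg _))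
    rw [pi_norm_le_iff_of_nonneg (by positivity)]
    intro j
    rw [gt_mulVec, Real.norm_eq_abs]
    have hzj : |((ω : SLn n) : Matrix (Fin n) (Fin n) ℝ).mulVec y j| ≤ B * ‖y‖ := by
      rw [← Real.norm_eq_abs]
      exact le_trans (norm_le_pi_norm _ j) hznorm
    by_cases hj : (j : ℕ) = 0
    · rw [if_pos hj, abs_mul, abs_of_pos (Real.exp_pos _)]
      exact mul_le_mul (le_max_left _ _) hzj (abs_nonneg _) hmax0
    · rw [if_neg hj, abs_mul, abs_of_pos (Real.exp_pos _)]
      exact mul_le_mul (le_max_right _ _) hzj (abs_nonneg _) hmax0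
  -- pointwise bound from the sup
  have hpt : ∀ ω ∈ Ω, f ω ≤ C * Real.exp (((d : ℝ) - r - 1) * s) := by
    intro ω hω
    exact le_trans (le_biSup_helper Ω f _ hub hω) (hb (i + N))
  -- error bound via the spanning set
  have hErr : ‖errV n d hdn' A u‖ ≤ (c * C) * Real.exp (-(((n : ℝ) - d + r) * s)) := by
    have hT : ‖(fun k => ∑ l, w k l * errV n d hdn' A u l : Fin d → ℝ)‖
        ≤ C * Real.exp (-(((n : ℝ) - d + r) * s)) := by
      rw [pi_norm_le_iff_of_nonneg (by positivity)]
      intro k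
      obtain ⟨ωk, hωk, hwk⟩ := hwW k
      have hzk : ∑ l, w k l * errV n d hdn' A u l
          = (((ωk : SLn n) : Matrix (Fin n) (Fin n) ℝ).mulVec y) ⟨0, hn0⟩ := by
        rw [mulVec_row0_split n d hdn' hn0 _ (hΩrow ωk hωk) y]
        apply Finset.sum_congr rfl
        intro q _
        rw [hwk q, hyk q]
      have hF0 : ‖((gtFlow n hn0 s : SLn n) : Matrix (Fin n) (Fin n) ℝ).mulVec
          (((ωk : SLn n) : Matrix (Fin n) (Fin n) ℝ).mulVec y) ⟨0, hn0⟩‖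
          ≤ C * Real.exp (((d : ℝ) - r - 1) * s) := by
        refine le_trans (norm_le_pi_norm _ _) ?_
        rw [← hfz]
        exact hpt ωk hωk
      rw [gt_mulVec] at hF0
      rw [if_pos rfl] at hF0
      rw [Real.norm_eq_abs, abs_mul, abs_of_pos (Real.exp_pos _)] at hF0
      rw [Real.norm_eq_abs, hzk]
      calc |((ωk : SLn n) : Matrix (Fin n) (Fin n) ℝ).mulVec y ⟨0, hn0⟩|
          = Real.exp (-(((n : ℝ) - 1) * s)) * (Real.exp (((n : ℝ) - 1) * s)
              * |((ωk : SLn n) : Matrix (Fin n) (Fin n) ℝ).mulVec y ⟨0, hn0⟩|) := by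
            rw [← mul_assoc, ← Real.exp_add]; simp
        _ ≤ Real.exp (-(((n : ℝ) - 1) * s)) * (C * Real.exp (((d : ℝ) - r - 1) * s)) :=
            mul_le_mul_of_nonneg_left hF0 (Real.exp_pos _).le
        _ = C * (Real.exp (-(((n : ℝ) - 1) * s)) * Real.exp (((d : ℝ) - r - 1) * s)) := by ring
        _ = C * Real.exp (-(((n : ℝ) - d + r) * s)) := by
            rw [← Real.exp_add]; congr 2; ring
    calc ‖errV n d hdn' A u‖
        ≤ c * ‖(fun k => ∑ l, w k l * errV n d hdn' A u l : Fin d → ℝ)‖ := hcmp _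
      _ ≤ c * (C * Real.exp (-(((n : ℝ) - d + r) * s))) :=
          mul_le_mul_of_nonneg_left hT hc0
      _ = (c * C) * Real.exp (-(((n : ℝ) - d + r) * s)) := by ring
  -- q bound via ω₀
  have hz₀ : ‖((ω₀ : SLn n) : Matrix (Fin n) (Fin n) ℝ).mulVec y‖
      ≤ C * Real.exp (((d : ℝ) - r) * s) := by
    set z₀ := ((ω₀ : SLn n) : Matrix (Fin n) (Fin n) ℝ).mulVec y with hz₀def
    have hFnorm : ∀ j : Fin n,
        ‖((gtFlow n hn0 s : SLn n) : Matrix (Fin n) (Fin n) ℝ).mulVec z₀ j‖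
          ≤ C * Real.exp (((d : ℝ) - r - 1) * s) := by
      intro j
      refine le_trans (norm_le_pi_norm _ _) ?_
      rw [hz₀def, ← hfz]
      exact hpt ω₀ hω₀
    rw [pi_norm_le_iff_of_nonneg (by positivity)]
    intro j
    have hFj := hFnorm j
    rw [gt_mulVec, Real.norm_eq_abs] at hFj
    rw [Real.norm_eq_abs]
    by_cases hj : (j : ℕ) = 0
    · rw [if_pos hj, abs_mul, abs_of_pos (Real.exp_pos _)] at hFj
      calc |z₀ j| = Real.exp (-(((n : ℝ) - 1) * s)) * (Real.exp (((n : ℝ) - 1) * s) * |z₀ j|) := by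
            rw [← mul_assoc, ← Real.exp_add]; simp
        _ ≤ Real.exp (-(((n : ℝ) - 1) * s)) * (C * Real.exp (((d : ℝ) - r - 1) * s)) :=
            mul_le_mul_of_nonneg_left hFj (Real.exp_pos _).le
        _ = C * Real.exp (-(((n : ℝ) - d + r) * s)) := by
            rw [mul_comm, mul_assoc, ← Real.exp_add]; congr 2; ring
        _ ≤ C * Real.exp (((d : ℝ) - r) * s) := by
            apply mul_le_mul_of_nonneg_left _ hC.le
            apply Real.exp_le_exp.mpr
            nlinarith
    · rw [if_neg hj, abs_mul, abs_of_pos (Real.exp_pos _)] at hFj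
      calc |z₀ j| = Real.exp s * (Real.exp (-s) * |z₀ j|) := by
            rw [← mul_assoc, ← Real.exp_add]; simp
        _ ≤ Real.exp s * (C * Real.exp (((d : ℝ) - r - 1) * s)) :=
            mul_le_mul_of_nonneg_left hFj (Real.exp_pos _).le
        _ = C * Real.exp (((d : ℝ) - r) * s) := by
            rw [mul_comm, mul_assoc, ← Real.exp_add]; congr 2; ring
  have hyb : ‖y‖ ≤ B₀ * (C * Real.exp (((d : ℝ) - r) * s)) := by
    have hyz : (((ω₀⁻¹ : SLn n) : SLn n) : Matrix (Fin n) (Fin n) ℝ).mulVec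
        (((ω₀ : SLn n) : Matrix (Fin n) (Fin n) ℝ).mulVec y) = y := by
      rw [Matrix.mulVec_mulVec, ← Matrix.SpecialLinearGroup.coe_mul, inv_mul_cancel,
        Matrix.SpecialLinearGroup.coe_one, Matrix.one_mulVec]
    calc ‖y‖ = ‖(((ω₀⁻¹ : SLn n) : SLn n) : Matrix (Fin n) (Fin n) ℝ).mulVec
          (((ω₀ : SLn n) : Matrix (Fin n) (Fin n) ℝ).mulVec y)‖ := by rw [hyz]
      _ ≤ B₀ * ‖((ω₀ : SLn n) : Matrix (Fin n) (Fin n) ℝ).mulVec y‖ := mulVec_norm_le _ _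
      _ ≤ B₀ * (C * Real.exp (((d : ℝ) - r) * s)) :=
          mul_le_mul_of_nonneg_left hz₀ hB₀0
  have hQb : ‖vq n d u‖ ≤ (B₀ * C) * Real.exp (((d : ℝ) - r) * s) := by
    rw [pi_norm_le_iff_of_nonneg (by positivity)]
    intro j
    have hval : vq n d u j = y ⟨d + (j : ℕ), by have := j.isLt; omega⟩ := by
      rw [hy, gA_mulVec_int n d hdn' A u]
      rw [dif_neg (by simp)]
      exact congrArg (vq n d u) (Fin.ext (by show (j : ℕ) = d + (j : ℕ) - d; omega))
    rw [hval]
    calc ‖y ⟨d + (j : ℕ), _⟩‖ ≤ ‖y‖ := norm_le_pi_norm y _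
      _ ≤ B₀ * (C * Real.exp (((d : ℝ) - r) * s)) := hyb
      _ = (B₀ * C) * Real.exp (((d : ℝ) - r) * s) := by ring
  -- conclude
  have hfin := norm_bt_le n d hd0 hdn' A s u _ _ hErr hQb
  refine le_trans hfin ?_
  apply max_le
  · have h1 : Real.exp (((n : ℝ) - d) * s) * ((c * C) * Real.exp (-(((n : ℝ) - d + r) * s)))
        = (c * C) * Real.exp (-(r * s)) := by
      rw [mul_comm, mul_assoc, ← Real.exp_add]
      congr 2
      ring
    rw [h1]
    apply mul_le_mul_of_nonneg_right _ (Real.exp_pos _).le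
    have : c ≤ max c B₀ + 1 := by
      have := le_max_left c B₀; linarith
    exact mul_le_mul_of_nonneg_right this hC.le
  · have h1 : Real.exp (-((d : ℝ) * s)) * ((B₀ * C) * Real.exp (((d : ℝ) - r) * s))
        = (B₀ * C) * Real.exp (-(r * s)) := by
      rw [mul_comm, mul_assoc, ← Real.exp_add]
      congr 2
      ring
    rw [h1]
    apply mul_le_mul_of_nonneg_right _ (Real.exp_pos _).le
    have : B₀ ≤ max c B₀ + 1 := by
      have := le_max_right c B₀; linarith
    exact mul_le_mul_of_nonneg_right this hC.le

end Interp
/-- **Lemma (interpretation of `W_{(n-d+r)/(d-r)}(d, n-d)`).** -/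
theorem interpretation_of_W
    (n d : ℕ) (hn : 3 ≤ n) (hd : 2 ≤ d) (hdn : d ≤ n - 1)
    (r : ℝ) (hr0 : 0 < r) (hrd : r < d)
    (A : Matrix (Fin d) (Fin (n - d)) ℝ)
    (Ω : Set (SLn n)) (hΩc : IsCompact Ω) (hΩne : Ω.Nonempty)
    (hΩrow : ∀ ω ∈ Ω, ∀ j : Fin n, d ≤ (j : ℕ) →
      (ω : Matrix (Fin n) (Fin n) ℝ) ⟨0, by omega⟩ j = 0)
    (hΩspan : Submodule.span ℝ
      {w : Fin d → ℝ | ∃ ω ∈ Ω, ∀ i : Fin d,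
        w i = (ω : Matrix (Fin n) (Fin n) ℝ) ⟨0, by omega⟩ (Fin.castLE (by omega) i)} = ⊤) :
    (MemW (((n : ℝ) - d + r) / (d - r)) A ↔
      (∃ R : ℝ, 0 < R ∧ ∃ t : ℕ → ℝ, Tendsto t atTop atTop ∧
        ∃ v : ℕ → (Fin n → ℤ), (∀ i, v i ≠ 0) ∧ ∀ i,
          ‖((btFlow n d (by omega) (by omega) (d * t i) * gA n d A : SLn n) :
              Matrix (Fin n) (Fin n) ℝ).mulVec (fun j => ((v i j : ℝ)))‖
            ≤ R * Real.exp (-(r * t i)))) ∧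
    ((∃ R : ℝ, 0 < R ∧ ∃ t : ℕ → ℝ, Tendsto t atTop atTop ∧
        ∃ v : ℕ → (Fin n → ℤ), (∀ i, v i ≠ 0) ∧ ∀ i,
          ‖((btFlow n d (by omega) (by omega) (d * t i) * gA n d A : SLn n) :
              Matrix (Fin n) (Fin n) ℝ).mulVec (fun j => ((v i j : ℝ)))‖
            ≤ R * Real.exp (-(r * t i))) ↔
      (∃ C : ℝ, 0 < C ∧ ∃ t : ℕ → ℝ, Tendsto t atTop atTop ∧
        ∃ v : ℕ → (Fin n → ℤ), (∀ i, v i ≠ 0) ∧ ∀ i,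
          (⨆ ω ∈ Ω, ‖((gtFlow n (by omega) (t i) * ω * gA n d A : SLn n) :
              Matrix (Fin n) (Fin n) ℝ).mulVec (fun j => ((v i j : ℝ)))‖)
            ≤ C * Real.exp (((d : ℝ) - r - 1) * t i))) := by
  constructor
  · constructor
    · exact fun h => Interp.one_to_two n d hn hd hdn r hr0 hrd A h
    · exact fun h => Interp.two_to_one n d hn hd hdn r hr0 hrd A h
  · constructor
    · exact fun h => Interp.two_to_three n d hn hd hdn r hr0 hrd A Ω hΩc hΩne hΩrow h
    · exact fun h =>
        Interp.three_to_two n d hn hd hdn r hr0 hrd A Ω hΩc hΩne hΩrow hΩspan h
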